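/- Let n ≥ 4 be an integer, set a = cos(π/n) if n is even and a = cos(2π/n) if n is odd, and let k be an odd integer with 1 ≤ k ≤ n−1; set x_k = cos(kπ/n). With F_a(x) := (1+a)·(T_n(x) + 2 − ((x+2)/n²)·T_n′(x)) − (1/n²)·(1−x)·(n² − T_n′(x)) and 𝓛_k(f;x) := (1 − x_k·x)·f(x_k) + (1 − x_k²)·(x − x_k)·f′(x_k), the following hold: 𝓛_k(F_a;x) > 0 for every x ∈ (−1, 0] when 1 ≤ k < n−2; 𝓛_{n−2}(F_a;x) is identically zero when n is odd; and 𝓛_{n−1}(F_a;x) is identically zero when n is even. -/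

import Mathlib

open Polynomial Real

/-- The `n`-th Chebyshev polynomial of the first kind, as a real polynomial. -/
noncomputable def chebT (n : ℕ) : Polynomial ℝ := Polynomial.Chebyshev.T ℝ (n : ℤ)

/-- `F_a(x) = (1+a)(T_n(x) + 2 - ((x+2)/n²) T_n'(x)) - (1/n²)(1-x)(n² - T_n'(x))`. -/
noncomputable def F (n : ℕ) (a x : ℝ) : ℝ :=
  (1 + a) * ((chebT n).eval x + 2 - (x + 2) / (n : ℝ) ^ 2 * (derivative (chebT n)).eval x)
    - 1 / (n : ℝ) ^ 2 * (1 - x) * ((n : ℝ) ^ 2 - (derivative (chebT n)).eval x)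

/-- `𝓛(c, f; x) = (1 - c x) f(c) + (1 - c²)(x - c) f'(c)`. -/
noncomputable def Lfun (c : ℝ) (f : ℝ → ℝ) (x : ℝ) : ℝ :=
  (1 - c * x) * f c + (1 - c ^ 2) * (x - c) * deriv f c

lemma cheb_deriv_cos (n : ℕ) (t : ℝ) :
    (derivative (chebT n)).eval (Real.cos t) * Real.sin t = n * Real.sin (n * t) := by
  have h1 : HasDerivAt (fun s : ℝ => (chebT n).eval (Real.cos s))
      ((derivative (chebT n)).eval (Real.cos t) * -Real.sin t) t :=
    ((chebT n).hasDerivAt (Real.cos t)).comp t (Real.hasDerivAt_cos t)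
  have h2 : HasDerivAt (fun s : ℝ => Real.cos ((n : ℝ) * s))
      (-Real.sin ((n : ℝ) * t) * ((n : ℝ) * 1)) t :=
    (Real.hasDerivAt_cos ((n : ℝ) * t)).comp t ((hasDerivAt_id t).const_mul (n : ℝ))
  have hfun : (fun s : ℝ => (chebT n).eval (Real.cos s))
      = fun s : ℝ => Real.cos ((n : ℝ) * s) := by
    funext s
    simp [chebT]
  rw [hfun] at h1
  have := h1.unique h2
  nlinarith [this]

lemma cheb_deriv2_cos (n : ℕ) (t : ℝ) :
    (derivative (derivative (chebT n))).eval (Real.cos t) * -Real.sin t * Real.sin t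
      + (derivative (chebT n)).eval (Real.cos t) * Real.cos t
      = (n : ℝ) * (Real.cos ((n : ℝ) * t) * ((n : ℝ) * 1)) := by
  have h1 : HasDerivAt (fun s : ℝ => (derivative (chebT n)).eval (Real.cos s) * Real.sin s)
      ((derivative (derivative (chebT n))).eval (Real.cos t) * -Real.sin t * Real.sin t
        + (derivative (chebT n)).eval (Real.cos t) * Real.cos t) t :=
    (((derivative (chebT n)).hasDerivAt (Real.cos t)).comp t (Real.hasDerivAt_cos t)).mul
      (Real.hasDerivAt_sin t)
  have h2 : HasDerivAt (fun s : ℝ => (n : ℝ) * Real.sin ((n : ℝ) * s))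
      ((n : ℝ) * (Real.cos ((n : ℝ) * t) * ((n : ℝ) * 1))) t :=
    (((Real.hasDerivAt_sin ((n : ℝ) * t)).comp t ((hasDerivAt_id t).const_mul (n : ℝ)))).const_mul (n : ℝ)
  have hfun : (fun s : ℝ => (derivative (chebT n)).eval (Real.cos s) * Real.sin s)
      = fun s : ℝ => (n : ℝ) * Real.sin ((n : ℝ) * s) := by
    funext s; exact cheb_deriv_cos n s
  rw [hfun] at h1
  exact h1.unique h2


set_option maxHeartbeats 1600000 in
/-- For `n ≥ 4`, `a = cos(π/n)` for even `n`, `a = cos(2π/n)` for odd `n`, and odd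
`k` with `1 ≤ k ≤ n-1`: `𝓛_k(F_a;x) > 0` on `(-1,0]` when `k < n-2`;
`𝓛_{n-2}(F_a;·) ≡ 0` when `n` is odd; `𝓛_{n-1}(F_a;·) ≡ 0` when `n` is even. -/
theorem L_of_F_odd_k (n : ℕ) (hn : 4 ≤ n) (a : ℝ)
    (ha : a = if Even n then Real.cos (π / n) else Real.cos (2 * π / n))
    (k : ℕ) (hko : Odd k) (hk1 : 1 ≤ k) (hk2 : k ≤ n - 1) :
    (k < n - 2 → ∀ x ∈ Set.Ioc (-1 : ℝ) 0, 0 < Lfun (Real.cos (k * π / n)) (F n a) x) ∧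
    (Odd n → k = n - 2 → ∀ x : ℝ, Lfun (Real.cos (k * π / n)) (F n a) x = 0) ∧
    (Even n → k = n - 1 → ∀ x : ℝ, Lfun (Real.cos (k * π / n)) (F n a) x = 0) := by
  have hnpos : (0:ℝ) < n := by
    have : 0 < n := by omega
    exact_mod_cast this
  have hn0 : (n:ℝ) ≠ 0 := ne_of_gt hnpos
  set θ : ℝ := (k : ℝ) * π / n with hθdef
  -- basic bounds on θ
  have hkltn : (k:ℝ) < n := by
    have : k < n := by omega
    exact_mod_cast this
  have hθ0 : 0 < θ := by
    have : (0:ℝ) < (k:ℝ) := by exact_mod_cast hk1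
    have := Real.pi_pos
    positivity
  have hθπ : θ < π := by
    rw [hθdef, div_lt_iff₀ hnpos]
    nlinarith [Real.pi_pos]
  have hsin : 0 < Real.sin θ := Real.sin_pos_of_pos_of_lt_pi hθ0 hθπ
  have hnθ : (n:ℝ) * θ = (k:ℝ) * π := by
    rw [hθdef]; field_simp
  have hsinn : Real.sin ((n:ℝ) * θ) = 0 := by
    rw [hnθ]; exact Real.sin_nat_mul_pi k
  have hcosn : Real.cos ((n:ℝ) * θ) = -1 := by
    rw [hnθ]
    obtain ⟨m, hm⟩ := hko
    subst hm
    have : ((2 * m + 1 : ℕ) : ℝ) * π = (m : ℝ) * (2 * π) + π := by push_cast; ring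
    rw [this]
    exact Real.cos_nat_mul_two_pi_add_pi m
  -- values at c = cos θ
  have hqc : (derivative (chebT n)).eval (Real.cos θ) = 0 := by
    have h := cheb_deriv_cos n θ
    rw [hsinn, mul_zero] at h
    exact (mul_eq_zero.mp h).resolve_right (ne_of_gt hsin)
  have hpc : (chebT n).eval (Real.cos θ) = -1 := by
    have : (chebT n).eval (Real.cos θ) = Real.cos ((n:ℝ) * θ) := by simp [chebT]
    rw [this, hcosn]
  have hc2 : (0:ℝ) < 1 - Real.cos θ ^ 2 := by
    have : Real.sin θ ^ 2 = 1 - Real.cos θ ^ 2 := Real.sin_sq θ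
    nlinarith
  have hc2ne : (1:ℝ) - Real.cos θ ^ 2 ≠ 0 := ne_of_gt hc2
  have hrc : (derivative (derivative (chebT n))).eval (Real.cos θ)
      = (n:ℝ)^2 / (1 - Real.cos θ ^ 2) := by
    have h := cheb_deriv2_cos n θ
    rw [hqc, hcosn] at h
    have hs2 : Real.sin θ ^ 2 = 1 - Real.cos θ ^ 2 := Real.sin_sq θ
    rw [eq_div_iff hc2ne]
    nlinarith [h]
  -- value of F at c
  have hFc : F n a (Real.cos θ) = a + Real.cos θ := by
    rw [F, hpc, hqc]
    field_simp
    ring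
  -- derivative of F at c
  have h1 := (chebT n).hasDerivAt (Real.cos θ)
  have h2 := (derivative (chebT n)).hasDerivAt (Real.cos θ)
  have hA : HasDerivAt (fun x : ℝ => (x + 2) / (n:ℝ)^2) (1 / (n:ℝ)^2) (Real.cos θ) := by
    simpa using ((hasDerivAt_id (Real.cos θ)).add_const 2).div_const ((n:ℝ)^2)
  have hB : HasDerivAt (fun x : ℝ => 1/(n:ℝ)^2 * (1 - x)) (1/(n:ℝ)^2 * (-1)) (Real.cos θ) := by
    exact ((hasDerivAt_id (Real.cos θ)).const_sub 1).const_mul (1/(n:ℝ)^2)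
  have hd0 : HasDerivAt (F n a) _ (Real.cos θ) :=
    (((h1.add_const 2).sub (hA.mul h2)).const_mul (1 + a)).sub
      (hB.mul (h2.const_sub ((n:ℝ)^2)))
  -- the key closed form
  have key : ∀ x : ℝ, Lfun (Real.cos θ) (F n a) x
      = (a + Real.cos θ) * (1 + Real.cos θ) * (1 + Real.cos θ - 2 * x) := by
    intro x
    rw [Lfun, hFc, hd0.deriv]
    simp only [hqc, hrc]
    field_simp
    ring
  have hθeq : Real.cos ((k:ℝ) * π / n) = Real.cos θ := rfl
  refine ⟨?_, ?_, ?_⟩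
  · -- positivity case
    intro hk x hx
    rw [hθeq, key x]
    have h1c : 0 < 1 + Real.cos θ := by
      have h := Real.cos_lt_cos_of_nonneg_of_le_pi (le_of_lt hθ0) (le_refl π) hθπ
      rw [Real.cos_pi] at h
      linarith
    have hkr : (k:ℝ) < (n:ℝ) - 2 := by
      have : k + 2 < n := by omega
      have : ((k:ℕ):ℝ) + 2 < n := by exact_mod_cast this
      linarith
    have hpin : 0 < π / n := by positivity
    have hac : 0 < a + Real.cos θ := by
      rcases Nat.even_or_odd n with he | ho
      · rw [ha, if_pos he]
        have hlt : θ < π - π / n := by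
          rw [hθdef, div_lt_iff₀ hnpos]
          have h2 : (π - π / n) * n = (n:ℝ) * π - π := by field_simp
          rw [h2]
          nlinarith [Real.pi_pos]
        have h := Real.cos_lt_cos_of_nonneg_of_le_pi (le_of_lt hθ0) (by linarith) hlt
        rw [Real.cos_pi_sub] at h
        linarith
      · rw [ha, if_neg (by simpa using Nat.not_even_iff_odd.mpr ho)]
        have hpin2 : 0 < 2 * π / (n:ℝ) := by positivity
        have hlt : θ < π - 2 * π / n := by
          rw [hθdef, div_lt_iff₀ hnpos]
          have h2 : (π - 2 * π / n) * n = (n:ℝ) * π - 2 * π := by field_simp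
          rw [h2]
          nlinarith [Real.pi_pos]
        have h := Real.cos_lt_cos_of_nonneg_of_le_pi (le_of_lt hθ0) (by linarith) hlt
        rw [Real.cos_pi_sub] at h
        linarith
    have hx2 : 0 < 1 + Real.cos θ - 2 * x := by
      rcases hx with ⟨_, hx0⟩
      linarith
    positivity
  · intro hodd hkeq x
    rw [hθeq, key x]
    have : a + Real.cos θ = 0 := by
      have hkr : (k:ℝ) = (n:ℝ) - 2 := by
        subst hkeq
        have : ((n - 2 : ℕ):ℝ) = (n:ℝ) - 2 := by
          rw [Nat.cast_sub (by omega)]; norm_num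
        exact this
      have hθ2 : θ = π - 2 * π / n := by
        rw [hθdef, hkr]; field_simp
      rw [ha, if_neg (by simpa using Nat.not_even_iff_odd.mpr hodd), hθ2, Real.cos_pi_sub]
      ring
    rw [this]; ring
  · intro heven hkeq x
    rw [hθeq, key x]
    have : a + Real.cos θ = 0 := by
      have hkr : (k:ℝ) = (n:ℝ) - 1 := by
        subst hkeq
        have : ((n - 1 : ℕ):ℝ) = (n:ℝ) - 1 := by
          rw [Nat.cast_sub (by omega)]; norm_num
        exact this
      have hθ2 : θ = π - π / n := by
        rw [hθdef, hkr]; field_simp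
      rw [ha, if_pos heven, hθ2, Real.cos_pi_sub]
      ring
    rw [this]; ring
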